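/- Let U, Z be random variables with E[U | Z] = 0 a.s. and E[U² | Z] = σ² a.s. For any square-integrable function m of Z with Var(m(Z)) > 0 and D satisfying Cov(D, m(Z)) ≠ 0, the asymptotic variance of the IV moment estimator, given by σ²·Var(m(Z)) / Cov(D, m(Z))², is minimized over m by m₀(z) = E[D | Z = z], with minimal value σ² / Var(m₀(Z)). -/

import Mathlib

open MeasureTheory ProbabilityTheory
open scoped ENNReal

/-- Covariance of two real random variables. -/
noncomputable def cov {Ω : Type*} [MeasurableSpace Ω] (μ : Measure Ω) (X Y : Ω → ℝ) : ℝ :=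
  (∫ ω, X ω * Y ω ∂μ) - (∫ ω, X ω ∂μ) * (∫ ω, Y ω ∂μ)

section Aux

variable {Ω : Type*} [MeasurableSpace Ω] {μ : Measure Ω}

lemma aux_mul_integrable {f g : Ω → ℝ} (hf : MemLp f 2 μ) (hg : MemLp g 2 μ) :
    Integrable (fun ω => f ω * g ω) μ := by
  have harith : (1 : ℝ≥0∞) / 1 = 1 / 2 + 1 / 2 := by
    rw [ENNReal.div_add_div_same, one_add_one_eq_two,
      ENNReal.div_self two_ne_zero ENNReal.ofNat_ne_top, div_one]
  have h := hf.smul (𝕜 := ℝ) hg (r := 1)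
  rw [memLp_one_iff_integrable] at h
  exact h.congr (Filter.Eventually.of_forall fun ω => by simp [mul_comm])

lemma aux_inner_sq_le {f g : Ω → ℝ} (hf : MemLp f 2 μ) (hg : MemLp g 2 μ) :
    (∫ ω, f ω * g ω ∂μ) ^ 2 ≤ (∫ ω, f ω ^ 2 ∂μ) * (∫ ω, g ω ^ 2 ∂μ) := by
  set F := hf.toLp f
  set G := hg.toLp g
  have h1 : (inner ℝ F G : ℝ) = ∫ ω, f ω * g ω ∂μ := by
    rw [L2.inner_def]
    refine integral_congr_ae ?_
    filter_upwards [hf.coeFn_toLp, hg.coeFn_toLp] with ω h1 h2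
    simp [F, G, h1, h2, RCLike.inner_apply, mul_comm]
  have h2 : (inner ℝ F F : ℝ) = ∫ ω, f ω ^ 2 ∂μ := by
    rw [L2.inner_def]
    refine integral_congr_ae ?_
    filter_upwards [hf.coeFn_toLp] with ω h1
    simp [F, h1, RCLike.inner_apply, sq]
  have h3 : (inner ℝ G G : ℝ) = ∫ ω, g ω ^ 2 ∂μ := by
    rw [L2.inner_def]
    refine integral_congr_ae ?_
    filter_upwards [hg.coeFn_toLp] with ω h1
    simp [G, h1, RCLike.inner_apply, sq]
  have h := real_inner_mul_inner_self_le F G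
  rw [h1, h2, h3] at h
  nlinarith [h]

/-- Cauchy–Schwarz for covariance. -/
lemma aux_cov_sq_le [IsProbabilityMeasure μ] {X Y : Ω → ℝ}
    (hX : MemLp X 2 μ) (hY : MemLp Y 2 μ) :
    (cov μ X Y) ^ 2 ≤ variance X μ * variance Y μ := by
  set a := ∫ ω, X ω ∂μ with ha
  set b := ∫ ω, Y ω ∂μ with hb
  have hX' : MemLp (fun ω => X ω - a) 2 μ := hX.sub (memLp_const a)
  have hY' : MemLp (fun ω => Y ω - b) 2 μ := hY.sub (memLp_const b)
  have hintX : Integrable X μ := hX.integrable one_le_two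
  have hintY : Integrable Y μ := hY.integrable one_le_two
  have hXY : Integrable (fun ω => X ω * Y ω) μ := aux_mul_integrable hX hY
  have hi1 : Integrable (fun ω => X ω * Y ω - a * Y ω) μ :=
    hXY.sub (hintY.const_mul a)
  have hi2 : Integrable (fun ω => X ω * Y ω - a * Y ω - b * X ω) μ :=
    hi1.sub (hintX.const_mul b)
  have hc : cov μ X Y = ∫ ω, (X ω - a) * (Y ω - b) ∂μ := by
    have heq : ∀ ω, (X ω - a) * (Y ω - b) = X ω * Y ω - a * Y ω - b * X ω + a * b := by
      intro ω; ring
    simp_rw [heq]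
    rw [integral_add hi2 (integrable_const _), integral_sub hi1 (hintX.const_mul b),
      integral_sub hXY (hintY.const_mul a), integral_const_mul, integral_const_mul,
      integral_const]
    simp only [probReal_univ, one_smul]
    simp only [cov, ← ha, ← hb]
    ring
  have hvX : variance X μ = ∫ ω, (X ω - a) ^ 2 ∂μ := by
    exact (variance_eq_integral hX.aemeasurable).trans rfl
  have hvY : variance Y μ = ∫ ω, (Y ω - b) ^ 2 ∂μ := by
    exact (variance_eq_integral hY.aemeasurable).trans rfl
  rw [hc, hvX, hvY]
  exact aux_inner_sq_le hX' hY'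

lemma aux_cov_self [IsProbabilityMeasure μ] {X : Ω → ℝ} (hX : MemLp X 2 μ) :
    cov μ X X = variance X μ := by
  rw [variance_eq_sub hX]
  simp only [cov, Pi.pow_apply, sq]

end Aux

/-- `cov μ D g = cov μ (μ[D|m']) g` for `g` measurable w.r.t. a sub-σ-algebra `m'`. -/
lemma aux_cov_condexp {Ω : Type*} {m0 : MeasurableSpace Ω} {μ : Measure Ω}
    [IsProbabilityMeasure μ] {m' : MeasurableSpace Ω}
    (hle : m' ≤ m0)
    {D : Ω → ℝ} (hD : MemLp D 2 μ) {g : Ω → ℝ}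
    (hgm : AEStronglyMeasurable[m'] g μ)
    (hg : MemLp g 2 μ)
    {m₀Z : Ω → ℝ} (hm₀Z : m₀Z =ᵐ[μ] μ[D | m']) :
    @cov Ω m0 μ D g = @cov Ω m0 μ m₀Z g := by
  haveI : SigmaFinite (μ.trim hle) := by
    have : IsFiniteMeasure (μ.trim hle) := isFiniteMeasure_trim hle
    infer_instance
  have hDint : Integrable D μ := hD.integrable one_le_two
  have hgD : Integrable (g * D) μ := by
    have := @aux_mul_integrable Ω m0 μ g D hg hD
    exact this.congr (Filter.Eventually.of_forall fun ω => rfl)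
  have hpull : μ[g * D | m'] =ᵐ[μ] g * μ[D | m'] :=
    condExp_mul_of_aestronglyMeasurable_left hgm hgD hDint
  have hint1 : ∫ ω, m₀Z ω ∂μ = ∫ ω, D ω ∂μ := by
    rw [integral_congr_ae hm₀Z, integral_condExp hle]
  have hint2 : ∫ ω, m₀Z ω * g ω ∂μ = ∫ ω, D ω * g ω ∂μ := by
    have e1 : (fun ω => m₀Z ω * g ω) =ᵐ[μ] μ[g * D | m'] := by
      filter_upwards [hm₀Z, hpull] with ω h1 h2
      rw [h1]
      show _ = (μ[g * D | m']) ω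
      rw [h2]
      simp [mul_comm]
    rw [integral_congr_ae e1, integral_condExp hle]
    exact integral_congr_ae (Filter.Eventually.of_forall fun ω => mul_comm (g ω) (D ω))
  simp only [cov, hint1, hint2]

/-- Optimality of the instrument `m₀(Z) = E[D | Z]` under homoskedasticity:
the asymptotic variance `σ²·Var(m(Z))/Cov(D, m(Z))²` of the IV estimator based on any
square-integrable instrument `m(Z)` is at least `σ²/Var(m₀(Z))`, and the instrument
`m₀` attains this minimal value. -/
theorem optimal_instrument_minimizes_asymptotic_variance
    {Ω β : Type*} [MeasurableSpace Ω] [MeasurableSpace β]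
    (μ : Measure Ω) [IsProbabilityMeasure μ]
    (D U : Ω → ℝ) (Z : Ω → β) (hZ : Measurable Z) (σ2 : ℝ) (hσ2 : 0 ≤ σ2)
    (hexog : μ[U | MeasurableSpace.comap Z inferInstance] =ᵐ[μ] 0)
    (hhomosked : μ[(fun ω => U ω ^ 2) | MeasurableSpace.comap Z inferInstance]
      =ᵐ[μ] (fun _ => σ2))
    (hD : MemLp D 2 μ)
    (m₀Z : Ω → ℝ)
    (hm₀Z : m₀Z =ᵐ[μ] μ[D | MeasurableSpace.comap Z inferInstance])
    (hm₀var : 0 < variance m₀Z μ)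
    (m : β → ℝ) (hm : Measurable m)
    (hmZ : MemLp (fun ω => m (Z ω)) 2 μ)
    (hvar : 0 < variance (fun ω => m (Z ω)) μ)
    (hrel : cov μ D (fun ω => m (Z ω)) ≠ 0) :
    σ2 / variance m₀Z μ ≤
        σ2 * variance (fun ω => m (Z ω)) μ / (cov μ D (fun ω => m (Z ω))) ^ 2 ∧
      σ2 * variance m₀Z μ / (cov μ D m₀Z) ^ 2 = σ2 / variance m₀Z μ := by
  have hle : MeasurableSpace.comap Z inferInstance ≤ ‹MeasurableSpace Ω› := hZ.comap_le
  -- m₀Z is in L²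
  have hm₀meas : AEStronglyMeasurable m₀Z μ :=
    (stronglyMeasurable_condExp.mono hle).aestronglyMeasurable.congr hm₀Z.symm
  have hm₀L2 : MemLp m₀Z 2 μ := by
    by_contra h
    have := evariance_eq_top hm₀meas h
    rw [variance, this] at hm₀var
    simp at hm₀var
  -- m(Z) measurability w.r.t. comap
  have hmZmeas : AEStronglyMeasurable[MeasurableSpace.comap Z inferInstance]
      (fun ω => m (Z ω)) μ := by
    refine ⟨fun ω => m (Z ω), ?_, Filter.EventuallyEq.rfl⟩
    exact ((hm.comp (Measurable.of_comap_le le_rfl)).stronglyMeasurable :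
      StronglyMeasurable[MeasurableSpace.comap Z inferInstance] fun ω => m (Z ω))
  have hm₀meas' : AEStronglyMeasurable[MeasurableSpace.comap Z inferInstance] m₀Z μ :=
    AEStronglyMeasurable.congr (stronglyMeasurable_condExp.aestronglyMeasurable) hm₀Z.symm
  -- Key covariance identities
  have hcov1 : cov μ D (fun ω => m (Z ω)) = cov μ m₀Z (fun ω => m (Z ω)) :=
    aux_cov_condexp hle hD hmZmeas hmZ hm₀Z
  have hcov2 : cov μ D m₀Z = cov μ m₀Z m₀Z :=
    aux_cov_condexp hle hD hm₀meas' hm₀L2 hm₀Z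
  have hcovself : cov μ m₀Z m₀Z = variance m₀Z μ := aux_cov_self hm₀L2
  have hCS : (cov μ m₀Z (fun ω => m (Z ω))) ^ 2 ≤
      variance m₀Z μ * variance (fun ω => m (Z ω)) μ := aux_cov_sq_le hm₀L2 hmZ
  constructor
  · have hC2pos : 0 < (cov μ D (fun ω => m (Z ω))) ^ 2 := by positivity
    rw [div_le_div_iff₀ hm₀var hC2pos, hcov1]
    nlinarith [hCS, mul_nonneg hσ2 (sq_nonneg (cov μ m₀Z (fun ω => m (Z ω))))]
  · rw [hcov2, hcovself]
    field_simp
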